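/- Let n ≥ 1 and let K := { z ∈ ℂ^n : ‖z‖ ≤ 1 } be the closed unit ball (‖·‖ the Euclidean norm), with open unit ball 𝔹^n := { z ∈ ℂ^n : ‖z‖ < 1 }. Then there exist open sets U_k ⊆ ℂ^n with K ⊆ U_k for every k ≥ 1 and holomorphic maps F_k : U_k → ℂ^n, such that the sequence (F_k) converges uniformly on every compact subset of 𝔹^n to a map F : 𝔹^n → ℂ^n whose image F(𝔹^n) is dense in ℂ^n. -/

import Mathlib

set_option maxHeartbeats 1000000

open Filter Metric Set

noncomputable def cay (z : ℂ) : ℂ := (1 + z) / (1 - z)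

lemma one_sub_ne' {z : ℂ} (hz : ‖z‖ < 1) : (1 : ℂ) - z ≠ 0 := by
  intro h
  have : z = 1 := by linear_combination -h
  simp [this] at hz

lemma cay_re_pos {z : ℂ} (hz : ‖z‖ < 1) : 0 < (cay z).re := by
  have h1 : (1 : ℂ) - z ≠ 0 := one_sub_ne' hz
  have h2 : 0 < Complex.normSq (1 - z) := by
    simpa [Complex.normSq_pos] using h1
  have habs : Complex.normSq z < 1 := by
    have := Complex.sq_norm z
    have h3 : ‖z‖ < 1 := by simpa using hz
    nlinarith [Complex.normSq_nonneg z, norm_nonneg z]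
  rw [cay, Complex.div_re]
  have hre : (1 + z).re * (1 - z).re / Complex.normSq (1 - z)
      + (1 + z).im * (1 - z).im / Complex.normSq (1 - z)
      = (1 - Complex.normSq z) / Complex.normSq (1 - z) := by
    rw [← add_div]
    congr 1
    simp [Complex.normSq_apply]; ring
  rw [hre]
  exact div_pos (by linarith) h2

lemma cay_slit {z : ℂ} (hz : ‖z‖ < 1) : cay z ∈ Complex.slitPlane :=
  Or.inl (cay_re_pos hz)

lemma exists_sin_sq (a : ℂ) (Y : ℝ) :
    ∃ u : ℂ, Complex.sin (u ^ 2) = a ∧ |u.re| < 1 / 2 ∧ Y < u.im := by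
  obtain ⟨ξ, hξ⟩ := Complex.sin_surjective a
  set M : ℝ := max (max Y |ξ.im|) 1 with hM
  have hM1 : 1 ≤ M := le_max_right _ _
  obtain ⟨k, hk⟩ := exists_nat_gt ((M ^ 2 + ξ.re) / (2 * Real.pi))
  have hπ : 0 < 2 * Real.pi := by positivity
  have hk' : M ^ 2 + ξ.re < 2 * Real.pi * k := by
    rw [div_lt_iff₀ hπ] at hk; linarith
  set w : ℂ := ξ - 2 * Real.pi * k with hw
  have hsinw : Complex.sin w = a := by
    have := Complex.sin_add_int_mul_two_pi (w) (k : ℤ)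
    rw [← hξ]
    rw [← this]
    congr 1
    push_cast [hw]
    ring
  obtain ⟨v, hv⟩ := IsAlgClosed.exists_pow_nat_eq (k := ℂ) w (n := 2) (by norm_num)
  set u : ℂ := if 0 ≤ v.im then v else -v with hu
  have hu2 : u ^ 2 = w := by
    rw [hu]; split <;> simpa using hv
  have him0 : 0 ≤ u.im := by
    rw [hu]; split
    · assumption
    · simp; linarith [lt_of_not_ge (by assumption : ¬ 0 ≤ v.im)]
  have hre2 : (u ^ 2).re = u.re ^ 2 - u.im ^ 2 := by
    rw [pow_two, Complex.mul_re]; ring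
  have him2 : (u ^ 2).im = 2 * u.re * u.im := by
    rw [pow_two, Complex.mul_im]; ring
  have hwre : w.re = ξ.re - 2 * Real.pi * k := by simp [hw]
  have hwim : w.im = ξ.im := by simp [hw]
  have key : M ^ 2 < u.im ^ 2 := by
    have : u.re ^ 2 - u.im ^ 2 = ξ.re - 2 * Real.pi * k := by
      rw [← hre2, hu2, hwre]
    nlinarith [sq_nonneg u.re]
  have himM : M < u.im := by nlinarith
  have himpos : 0 < u.im := by linarith
  have hreu : 2 * u.re * u.im = ξ.im := by rw [← him2, hu2, hwim]
  have hξim : |ξ.im| ≤ M := le_trans (le_max_right _ _) (le_max_left _ _)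
  have hre : |u.re| < 1 / 2 := by
    have : u.re = ξ.im / (2 * u.im) := by field_simp; linarith [hreu]
    rw [this, abs_div]
    rw [div_lt_iff₀ (by positivity : (0:ℝ) < |2 * u.im|)]
    have : |2 * u.im| = 2 * u.im := abs_of_pos (by linarith)
    rw [this]
    nlinarith [abs_nonneg ξ.im]
  have hYM : Y ≤ M := le_trans (le_max_left _ _) (le_max_left _ _)
  exact ⟨u, by rw [hu2, hsinw], hre, lt_of_le_of_lt hYM himM⟩

noncomputable def gf (z : ℂ) : ℂ := Complex.sin ((Complex.I * Complex.log (cay z)) ^ 2)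

lemma exists_booster (a : ℂ) (S : ℝ) :
    ∃ ζ : ℂ, ‖ζ‖ < 1 ∧ gf ζ = a ∧ S < (1 - ‖ζ‖ ^ 2) * ‖cay ζ‖ ^ 2 := by
  set Y : ℝ := max 0 (Real.log (8 * |S| + 8)) with hY
  obtain ⟨u, hsin, hre, him⟩ := exists_sin_sq a Y
  have hy0 : 0 < u.im := lt_of_le_of_lt (le_max_left _ _) him
  set W : ℂ := Complex.exp (-Complex.I * u) with hW
  have hmiu_re : (-Complex.I * u).re = u.im := by simp
  have hmiu_im : (-Complex.I * u).im = -u.re := by simp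
  have hWre : W.re = Real.exp u.im * Real.cos u.re := by
    rw [hW, Complex.exp_re, hmiu_re, hmiu_im, Real.cos_neg]
  have hWnorm : ‖W‖ = Real.exp u.im := by
    rw [hW, Complex.norm_exp, hmiu_re]
  have hcos : (7:ℝ)/8 ≤ Real.cos u.re := by
    have := Real.one_sub_sq_div_two_le_cos (x := u.re)
    have h2 : u.re ^ 2 < (1/2)^2 := by
      have := abs_lt.mp hre
      nlinarith [this.1, this.2]
    nlinarith
  have hexp1 : (1:ℝ) < Real.exp u.im := by
    rw [Real.one_lt_exp_iff]; exact hy0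
  have hWrepos : 0 < W.re := by
    rw [hWre]; nlinarith
  have hW1 : W + 1 ≠ 0 := by
    intro h
    have : W = -1 := by linear_combination h
    rw [this, norm_neg, norm_one] at hWnorm
    linarith
  set ζ : ℂ := (W - 1) / (W + 1) with hζ
  have hnsq : Complex.normSq (W + 1) = Complex.normSq W + 2 * W.re + 1 := by
    simp [Complex.normSq_apply]; ring
  have hnsq' : Complex.normSq (W - 1) = Complex.normSq W - 2 * W.re + 1 := by
    simp [Complex.normSq_apply]; ring
  have hden : 0 < Complex.normSq (W + 1) := Complex.normSq_pos.mpr hW1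
  have hζsq : ‖ζ‖ ^ 2 = Complex.normSq (W - 1) / Complex.normSq (W + 1) := by
    rw [hζ, Complex.sq_norm, Complex.normSq_div]
  have hζ1 : 1 - ‖ζ‖ ^ 2 = 4 * W.re / Complex.normSq (W + 1) := by
    have hd : Complex.normSq (W - 1) = Complex.normSq (W + 1) - 4 * W.re := by
      rw [hnsq, hnsq']; ring
    rw [hζsq, hd]
    field_simp; ring
  have hζlt : ‖ζ‖ < 1 := by
    have h1 : ‖ζ‖ ^ 2 < 1 := by
      rw [hζsq, div_lt_one hden, hnsq, hnsq']; linarith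
    nlinarith [norm_nonneg ζ]
  have hcay : cay ζ = W := by
    have h1mζ : (1 : ℂ) - ζ = 2 / (W + 1) := by
      rw [hζ]; field_simp; ring
    have h1pζ : (1 : ℂ) + ζ = 2 * W / (W + 1) := by
      rw [hζ]; field_simp; ring
    rw [cay, h1mζ, h1pζ]
    field_simp
  have hgf : gf ζ = a := by
    rw [gf, hcay, hW, Complex.log_exp (by rw [hmiu_im]; cases abs_lt.mp hre; linarith [Real.pi_gt_three]) (by rw [hmiu_im]; cases abs_lt.mp hre; linarith [Real.pi_gt_three])]
    rw [← hsin]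
    congr 1
    have : Complex.I * (-Complex.I * u) = u := by
      have := Complex.I_mul_I
      linear_combination (-u) * this
    rw [this]
  refine ⟨ζ, hζlt, hgf, ?_⟩
  -- final inequality
  have hWnormSq : Complex.normSq W = Real.exp u.im ^ 2 := by
    rw [← Complex.sq_norm, hWnorm]
  have hnplus_le : Complex.normSq (W + 1) ≤ 4 * Real.exp u.im ^ 2 := by
    rw [hnsq, hWnormSq]
    have : W.re ≤ Real.exp u.im := by
      calc W.re ≤ |W.re| := le_abs_self _
      _ ≤ ‖W‖ := Complex.abs_re_le_norm W
      _ = Real.exp u.im := by rw [hWnorm]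
    nlinarith
  have hS : 8 * |S| + 8 < Real.exp u.im := by
    have hYle : Real.log (8 * |S| + 8) ≤ Y := le_max_right _ _
    have := Real.exp_log (by positivity : (0:ℝ) < 8 * |S| + 8)
    calc 8 * |S| + 8 = Real.exp (Real.log (8 * |S| + 8)) := this.symm
    _ ≤ Real.exp Y := Real.exp_le_exp.mpr hYle
    _ < Real.exp u.im := Real.exp_lt_exp.mpr him
  have hfinal : (7:ℝ)/8 * Real.exp u.im ≤ (1 - ‖ζ‖ ^ 2) * ‖cay ζ‖ ^ 2 := by
    rw [hζ1, hcay, hWnorm]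
    have hrw : 4 * W.re / Complex.normSq (W + 1) * Real.exp u.im ^ 2
        = 4 * W.re * Real.exp u.im ^ 2 / Complex.normSq (W + 1) := by ring
    rw [hrw, le_div_iff₀ hden]
    have hWre_ge : (7:ℝ)/8 * Real.exp u.im ≤ W.re := by
      rw [hWre]; nlinarith [Real.exp_pos u.im]
    calc 7/8 * Real.exp u.im * Complex.normSq (W + 1)
        ≤ 7/8 * Real.exp u.im * (4 * Real.exp u.im ^ 2) := by
          apply mul_le_mul_of_nonneg_left hnplus_le; positivity
      _ ≤ 4 * W.re * Real.exp u.im ^ 2 := by nlinarith [Real.exp_pos u.im]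
  calc S ≤ |S| := le_abs_self S
    _ < 7/8 * Real.exp u.im := by nlinarith
    _ ≤ _ := hfinal

lemma cay_diffAt {ζ : ℂ} (h : ‖ζ‖ < 1) : DifferentiableAt ℂ cay ζ := by
  have : DifferentiableAt ℂ (fun z : ℂ => (1 + z) / (1 - z)) ζ :=
    DifferentiableAt.div ((differentiableAt_const 1).add differentiableAt_id)
      ((differentiableAt_const 1).sub differentiableAt_id) (one_sub_ne' h)
  exact this

lemma gf_diffAt {ζ : ℂ} (h : ‖ζ‖ < 1) : DifferentiableAt ℂ gf ζ := by
  have h1 : DifferentiableAt ℂ (fun z => Complex.log (cay z)) ζ :=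
    (cay_diffAt h).clog (cay_slit h)
  have h2 : DifferentiableAt ℂ (fun z => (Complex.I * Complex.log (cay z)) ^ 2) ζ :=
    (h1.const_mul Complex.I).pow 2
  exact h2.csin

noncomputable def Phi (m : ℕ) (z : EuclideanSpace ℂ (Fin (m + 1))) :
    EuclideanSpace ℂ (Fin (m + 1)) :=
  WithLp.toLp 2 fun j => if j = 0 then gf (z 0) else Complex.sin (cay (z 0) * z j)

lemma coord_le {m : ℕ} (z : EuclideanSpace ℂ (Fin m)) (j : Fin m) : ‖z j‖ ≤ ‖z‖ := by
  rw [EuclideanSpace.norm_eq]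
  have h1 : ‖z j‖ ^ 2 ≤ ∑ i, ‖z i‖ ^ 2 :=
    Finset.single_le_sum (f := fun i => ‖z i‖ ^ 2) (fun i _ => by positivity)
      (Finset.mem_univ j)
  calc ‖z j‖ = Real.sqrt (‖z j‖ ^ 2) := by rw [Real.sqrt_sq (norm_nonneg _)]
    _ ≤ _ := Real.sqrt_le_sqrt h1

lemma phi_diff (m : ℕ) :
    DifferentiableOn ℂ (Phi m) {z : EuclideanSpace ℂ (Fin (m + 1)) | ‖z 0‖ < 1} := by
  rw [differentiableOn_piLp]
  intro j
  intro z hz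
  have hz0 : ‖z 0‖ < 1 := hz
  have hproj0 : DifferentiableAt ℂ (fun z : EuclideanSpace ℂ (Fin (m + 1)) => z 0) z := by
    exact (EuclideanSpace.proj (0 : Fin (m + 1)) (𝕜 := ℂ)).differentiableAt
  have hprojj : DifferentiableAt ℂ (fun z : EuclideanSpace ℂ (Fin (m + 1)) => z j) z := by
    exact (EuclideanSpace.proj j (𝕜 := ℂ)).differentiableAt
  apply DifferentiableAt.differentiableWithinAt
  by_cases hj : j = 0
  · subst hj
    have heq : (fun z : EuclideanSpace ℂ (Fin (m + 1)) => Phi m z 0)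
        = fun z => gf (z 0) := by
      funext z; simp [Phi]
    rw [heq]
    exact (gf_diffAt hz0).comp (g := gf) z hproj0
  · have heq : (fun z : EuclideanSpace ℂ (Fin (m + 1)) => Phi m z j)
        = fun z => Complex.sin (cay (z 0) * z j) := by
      funext z; simp [Phi, hj]
    rw [heq]
    exact (((cay_diffAt hz0).comp z hproj0).mul hprojj).csin

lemma phi_surj (m : ℕ) (w : EuclideanSpace ℂ (Fin (m + 1))) :
    ∃ z : EuclideanSpace ℂ (Fin (m + 1)), ‖z‖ < 1 ∧ Phi m z = w := by
  choose ξ hξ using fun j => Complex.sin_surjective (w j)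
  set S : ℝ := ∑ j, ‖ξ j‖ ^ 2 with hS
  have hS0 : 0 ≤ S := Finset.sum_nonneg fun i _ => by positivity
  obtain ⟨ζ, hζ1, hζ2, hζ3⟩ := exists_booster (w 0) S
  set W : ℂ := cay ζ with hWdef
  have hWpos : 0 < ‖W‖ ^ 2 := by nlinarith [norm_nonneg ζ, sq_nonneg ‖W‖]
  have hW0 : W ≠ 0 := by
    intro h; rw [h] at hWpos; simp at hWpos
  set z : EuclideanSpace ℂ (Fin (m + 1)) :=
    WithLp.toLp 2 (fun j => if j = 0 then ζ else ξ j / W) with hzdef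
  have hz0 : z 0 = ζ := by simp [hzdef]
  have hzj : ∀ j : Fin (m + 1), j ≠ 0 → z j = ξ j / W := by
    intro j hj; simp [hzdef, hj]
  refine ⟨z, ?_, ?_⟩
  · rw [EuclideanSpace.norm_eq]
    have hsum : ∑ i, ‖z i‖ ^ 2 < 1 := by
      rw [Fintype.sum_eq_add_sum_compl 0 (fun i => ‖z i‖ ^ 2)]
      have hzrest : ∀ j ∈ ({0}ᶜ : Finset (Fin (m + 1))), ‖z j‖ ^ 2 = ‖ξ j‖ ^ 2 / ‖W‖ ^ 2 := by
        intro j hj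
        rw [hzj j (by simpa using hj), norm_div, div_pow]
      rw [Finset.sum_congr rfl hzrest, ← Finset.sum_div, hz0]
      have hle : ∑ j ∈ ({0}ᶜ : Finset (Fin (m + 1))), ‖ξ j‖ ^ 2 ≤ S := by
        rw [hS]
        exact Finset.sum_le_sum_of_subset_of_nonneg (Finset.subset_univ _)
          (fun i _ _ => by positivity)
      have : (∑ j ∈ ({0}ᶜ : Finset (Fin (m + 1))), ‖ξ j‖ ^ 2) / ‖W‖ ^ 2 < 1 - ‖ζ‖ ^ 2 := by
        rw [div_lt_iff₀ hWpos]
        calc ∑ j ∈ ({0}ᶜ : Finset (Fin (m + 1))), ‖ξ j‖ ^ 2 ≤ S := hle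
          _ < (1 - ‖ζ‖ ^ 2) * ‖W‖ ^ 2 := hζ3
      linarith
    have h0 : (0:ℝ) ≤ ∑ i, ‖z i‖ ^ 2 := Finset.sum_nonneg fun i _ => by positivity
    calc Real.sqrt (∑ i, ‖z i‖ ^ 2) < Real.sqrt 1 := by
          exact Real.sqrt_lt_sqrt h0 hsum
      _ = 1 := Real.sqrt_one
  · ext j
    by_cases hj : j = 0
    · subst hj
      show Phi m z 0 = w 0
      simp only [Phi, PiLp.toLp_apply, if_pos rfl]
      rw [hz0]; exact hζ2
    · show Phi m z j = w j
      simp only [Phi, PiLp.toLp_apply, if_neg hj]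
      rw [hz0, hzj j hj, ← hWdef, mul_div_cancel₀ _ hW0]
      exact hξ j

noncomputable def rr (k : ℕ) : ℝ := ((k : ℝ) + 1) / ((k : ℝ) + 2)

lemma rr_nonneg (k : ℕ) : 0 ≤ rr k := by unfold rr; positivity
lemma rr_le_one (k : ℕ) : rr k ≤ 1 := by
  unfold rr; rw [div_le_one (by positivity)]; linarith
lemma one_sub_rr (k : ℕ) : 1 - rr k = 1 / ((k : ℝ) + 2) := by
  unfold rr; field_simp; norm_num

/-- Theorem 1.4 specialized to `Y = ℂ^n` and `K` the closed unit ball, where `Γ` is the unit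
sphere and `K ∖ Γ = 𝔹^n` is the open unit ball: there exist open neighborhoods `U k` of `K`
and holomorphic maps `F k : U k → ℂ^n` converging uniformly on compact subsets of `𝔹^n` to a
map `F` whose image `F (𝔹^n)` is dense in `ℂ^n`. -/
theorem stmt10
    (n : ℕ) (hn : 1 ≤ n) :
    ∃ U : ℕ → Set (EuclideanSpace ℂ (Fin n)),
      ∃ F : ℕ → EuclideanSpace ℂ (Fin n) → EuclideanSpace ℂ (Fin n),
      ∃ Fl : EuclideanSpace ℂ (Fin n) → EuclideanSpace ℂ (Fin n),
        (∀ k, IsOpen (U k)) ∧ (∀ k, closedBall (0 : EuclideanSpace ℂ (Fin n)) 1 ⊆ U k) ∧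
        (∀ k, DifferentiableOn ℂ (F k) (U k)) ∧
        (∀ c : Set (EuclideanSpace ℂ (Fin n)), IsCompact c →
          c ⊆ ball (0 : EuclideanSpace ℂ (Fin n)) 1 →
          TendstoUniformlyOn (fun k => F k) Fl atTop c) ∧
        Dense (Fl '' ball (0 : EuclideanSpace ℂ (Fin n)) 1) := by
  obtain ⟨m, rfl⟩ : ∃ m, n = m + 1 := ⟨n - 1, by omega⟩
  refine ⟨fun k => ball 0 (((k : ℝ) + 2) / ((k : ℝ) + 1)),
    fun k z => Phi m (((rr k : ℝ) : ℂ) • z), Phi m, ?_, ?_, ?_, ?_, ?_⟩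
  · intro k; exact isOpen_ball
  · intro k
    apply closedBall_subset_ball
    rw [lt_div_iff₀ (by positivity)]
    linarith
  · intro k
    have hmaps : MapsTo (fun z : EuclideanSpace ℂ (Fin (m + 1)) => ((rr k : ℝ) : ℂ) • z)
        (ball 0 (((k : ℝ) + 2) / ((k : ℝ) + 1)))
        {z : EuclideanSpace ℂ (Fin (m + 1)) | ‖z 0‖ < 1} := by
      intro z hz
      have hz' : ‖z‖ < ((k : ℝ) + 2) / ((k : ℝ) + 1) := mem_ball_zero_iff.mp hz
      have h1 : ‖(((rr k : ℝ) : ℂ) • z) 0‖ ≤ ‖((rr k : ℝ) : ℂ) • z‖ := coord_le _ _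
      have h2 : ‖((rr k : ℝ) : ℂ) • z‖ = rr k * ‖z‖ := by
        rw [norm_smul, Complex.norm_real, Real.norm_eq_abs, abs_of_nonneg (rr_nonneg k)]
      have hrrpos : (0:ℝ) ≤ rr k := rr_nonneg k
      have : rr k * ‖z‖ < 1 := by
        have hk2 : (0:ℝ) < (k : ℝ) + 2 := by positivity
        have hk1 : (0:ℝ) < (k : ℝ) + 1 := by positivity
        have hrr : rr k = ((k : ℝ) + 1) / ((k : ℝ) + 2) := rfl
        have hrrpos' : 0 < rr k := by unfold rr; positivity
        calc rr k * ‖z‖ < rr k * (((k : ℝ) + 2) / ((k : ℝ) + 1)) :=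
              mul_lt_mul_of_pos_left hz' hrrpos'
          _ = 1 := by rw [hrr]; field_simp
      exact lt_of_le_of_lt h1 (by rw [h2] at *; exact this)
    have hsmul : DifferentiableOn ℂ
        (fun z : EuclideanSpace ℂ (Fin (m + 1)) => ((rr k : ℝ) : ℂ) • z)
        (ball 0 (((k : ℝ) + 2) / ((k : ℝ) + 1))) :=
      (differentiable_id.const_smul (((rr k : ℝ) : ℂ))).differentiableOn
    exact DifferentiableOn.comp (g := Phi m) (phi_diff m) hsmul hmaps
  · intro c hc hsub
    rcases c.eq_empty_or_nonempty with rfl | hne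
    · exact tendstoUniformlyOn_empty
    obtain ⟨z₀, hz₀c, hmax⟩ := hc.exists_isMaxOn hne continuous_norm.continuousOn
    set ρ : ℝ := ‖z₀‖ with hρ
    have hρ1 : ρ < 1 := mem_ball_zero_iff.mp (hsub hz₀c)
    have hρ0 : (0:ℝ) ≤ ρ := norm_nonneg _
    have hsubρ : c ⊆ closedBall 0 ρ := fun z hz => mem_closedBall_zero_iff.mpr (hmax hz)
    have hcont : ContinuousOn (Phi m) (closedBall (0 : EuclideanSpace ℂ (Fin (m+1))) ρ) := by
      apply ((phi_diff m).continuousOn).mono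
      intro z hz
      have h1 : ‖z 0‖ ≤ ‖z‖ := coord_le z 0
      have h2 : ‖z‖ ≤ ρ := mem_closedBall_zero_iff.mp hz
      exact lt_of_le_of_lt (le_trans h1 h2) hρ1
    have huc := (isCompact_closedBall (0 : EuclideanSpace ℂ (Fin (m+1))) ρ).uniformContinuousOn_of_continuous hcont
    rw [Metric.tendstoUniformlyOn_iff]
    intro ε hε
    rw [Metric.uniformContinuousOn_iff] at huc
    obtain ⟨δ, hδ, hucd⟩ := huc ε hε
    obtain ⟨N, hN⟩ := exists_nat_gt (1 / δ)
    have hNpos : 0 < (N:ℝ) := lt_trans (by positivity) hN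
    filter_upwards [eventually_ge_atTop N] with k hk
    intro z hzc
    have hz' : z ∈ closedBall (0 : EuclideanSpace ℂ (Fin (m+1))) ρ := hsubρ hzc
    have hznorm : ‖z‖ ≤ ρ := mem_closedBall_zero_iff.mp hz'
    have hrz : ((rr k : ℝ) : ℂ) • z ∈ closedBall (0 : EuclideanSpace ℂ (Fin (m+1))) ρ := by
      rw [mem_closedBall_zero_iff, norm_smul, Complex.norm_real, Real.norm_eq_abs,
        abs_of_nonneg (rr_nonneg k)]
      calc rr k * ‖z‖ ≤ 1 * ρ := mul_le_mul (rr_le_one k) hznorm (norm_nonneg _) one_pos.le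
        _ = ρ := one_mul ρ
    have hdist : dist z (((rr k : ℝ) : ℂ) • z) < δ := by
      rw [dist_eq_norm]
      have hzz : z - ((rr k : ℝ) : ℂ) • z = (((1 - rr k : ℝ)) : ℂ) • z := by
        push_cast
        rw [sub_smul, one_smul]
      rw [hzz, norm_smul, Complex.norm_real, Real.norm_eq_abs, abs_of_nonneg (by linarith [rr_le_one k])]
      have h1 : 1 - rr k = 1 / ((k : ℝ) + 2) := one_sub_rr k
      have hkN : (N : ℝ) ≤ (k : ℝ) := by exact_mod_cast hk
      have h2 : 1 / ((k : ℝ) + 2) < δ := by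
        rw [div_lt_iff₀ (by positivity)]
        rw [div_lt_iff₀ hδ] at hN
        nlinarith
      calc (1 - rr k) * ‖z‖ ≤ (1 - rr k) * 1 := by
            apply mul_le_mul_of_nonneg_left _ (by linarith [rr_le_one k])
            linarith
        _ = 1 - rr k := mul_one _
        _ < δ := by rw [h1]; exact h2
    exact hucd z hz' _ hrz hdist
  · have himg : Phi m '' ball 0 1 = univ := by
      apply eq_univ_of_forall
      intro w
      obtain ⟨z, hz, hphi⟩ := phi_surj m w
      exact ⟨z, mem_ball_zero_iff.mpr hz, hphi⟩
    rw [himg]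
    exact dense_univ
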